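/- Let f : [0,l] → ℝ be continuous with f(0) = f(l) = 0, and suppose there is a finite set S ⊂ (0,l) such that f''(t) ≤ 0 in the support sense for all t ∈ (0,l) \ S, and at each t ∈ S the upper right Dini derivative of f is at most its lower left Dini derivative (limsup_{τ→0⁺}(f(t+τ)−f(t))/τ ≤ liminf_{τ→0⁺}(f(t)−f(t−τ))/τ). Then f is concave on [0,l] and f(t) ≥ 0 for all t ∈ [0,l]. -/

import Mathlib

open Filter Set

/-- `f''(t) ≤ 0` in the support sense. -/
def SuppSecondLEZero (f : ℝ → ℝ) (t : ℝ) : Prop :=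
  ∃ A : ℝ, ∀ ε > (0 : ℝ), ∀ᶠ τ in nhds (0 : ℝ),
    f (t + τ) ≤ f t + A * τ + ε * τ ^ 2

/-- Upper right Dini derivative, valued in the extended reals. -/
noncomputable def dPlus (f : ℝ → ℝ) (t : ℝ) : EReal :=
  Filter.limsup (fun s => (((f s - f t) / (s - t) : ℝ) : EReal)) (nhdsWithin t (Set.Ioi t))

/-- Lower left Dini derivative, valued in the extended reals. -/
noncomputable def dMinus (f : ℝ → ℝ) (t : ℝ) : EReal :=
  Filter.liminf (fun s => (((f s - f t) / (s - t) : ℝ) : EReal)) (nhdsWithin t (Set.Iio t))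

private lemma slopeH1 {u v w fu fv fw : ℝ} (h1 : u < v) (h2 : v < w)
    (h : (fw - fv) / (w - v) ≤ (fv - fu) / (v - u)) :
    (fw - fv) / (w - v) ≤ (fw - fu) / (w - u) := by
  rw [div_le_div_iff₀ (by linarith) (by linarith)] at h
  rw [div_le_div_iff₀ (by linarith) (by linarith)]
  nlinarith [h]

private lemma slopeH2 {u v w fu fv fw : ℝ} (h1 : u < v) (h2 : v < w)
    (h : (fw - fv) / (w - v) ≤ (fv - fu) / (v - u)) :
    (fw - fu) / (w - u) ≤ (fv - fu) / (v - u) := by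
  rw [div_le_div_iff₀ (by linarith) (by linarith)] at h
  rw [div_le_div_iff₀ (by linarith) (by linarith)]
  nlinarith [h]

private lemma lemB {a b : ℝ} (f : ℝ → ℝ) (hf : ContinuousOn f (Set.Icc a b))
    (hsupp : ∀ t ∈ Set.Ioo a b, SuppSecondLEZero f t) : ConcaveOn ℝ (Set.Icc a b) f := by
  have chord : ∀ x ∈ Icc a b, ∀ z ∈ Icc a b, x < z → ∀ y ∈ Ioo x z,
      f x + (f z - f x) / (z - x) * (y - x) ≤ f y := by
    intro x hx z hz hxz y hy
    by_contra hcon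
    push_neg at hcon
    set s : ℝ := (f z - f x) / (z - x) with hs
    set c : ℝ := f x + s * (y - x) - f y with hc
    have hcpos : 0 < c := by simp only [hc]; linarith
    have hq : 0 < (y - x) * (z - y) := mul_pos (by linarith [hy.1]) (by linarith [hy.2])
    set ε : ℝ := c / (2 * ((y - x) * (z - y))) with hε
    have hεpos : 0 < ε := by positivity
    set ψ : ℝ → ℝ := fun t => f x + s * (t - x) - f t - ε * ((t - x) * (z - t)) with hψ
    have hsub : Icc x z ⊆ Icc a b := Icc_subset_Icc hx.1 hz.2
    have hψc : ContinuousOn ψ (Icc x z) := by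
      apply ContinuousOn.sub
      apply ContinuousOn.sub
      · exact (continuous_const.add (continuous_const.mul (continuous_id.sub continuous_const))).continuousOn
      · exact hf.mono hsub
      · exact (continuous_const.mul ((continuous_id.sub continuous_const).mul
          (continuous_const.sub continuous_id))).continuousOn
    obtain ⟨m, hmI, hmax⟩ := isCompact_Icc.exists_isMaxOn (nonempty_Icc.2 hxz.le) hψc
    have hψy : ψ y = c / 2 := by
      simp only [hψ, hε]
      rw [div_mul_eq_mul_div c, mul_div_mul_right _ _ hq.ne']
      linarith [hc, show s * (y - x) = (f z - f x) * (y - x) / (z - x) by rw [hs, div_mul_eq_mul_div]]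
    have hψm : c / 2 ≤ ψ m := by
      have := hmax ⟨hy.1.le, hy.2.le⟩
      simpa [hψy] using this
    have hψx : ψ x = 0 := by simp [hψ]
    have hψz : ψ z = 0 := by
      have : s * (z - x) = f z - f x := div_mul_cancel₀ _ (by linarith : z - x ≠ 0)
      simp only [hψ]
      rw [this]; ring
    have hmx : x < m := by
      rcases hmI.1.lt_or_eq with h | h
      · exact h
      · exfalso; rw [← h, hψx] at hψm; linarith
    have hmz : m < z := by
      rcases hmI.2.lt_or_eq with h | h
      · exact h
      · exfalso; rw [h, hψz] at hψm; linarith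
    obtain ⟨A, hA⟩ := hsupp m ⟨lt_of_le_of_lt hx.1 hmx, lt_of_lt_of_le hmz hz.2⟩
    have hev1 := hA (ε / 2) (by positivity)
    have hev2 : ∀ᶠ τ in nhds (0 : ℝ), m + τ ∈ Icc x z := by
      have hmem : Ioo (x - m) (z - m) ∈ nhds (0 : ℝ) := Ioo_mem_nhds (by linarith) (by linarith)
      filter_upwards [hmem] with τ hτ
      exact ⟨by linarith [hτ.1], by linarith [hτ.2]⟩
    have hcomb := hev1.and hev2
    rw [Metric.eventually_nhds_iff] at hcomb
    obtain ⟨δ, hδ, hball⟩ := hcomb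
    set r : ℝ := δ / 2 with hr
    have hrpos : 0 < r := by positivity
    have hd1 : dist r 0 < δ := by rw [Real.dist_eq, sub_zero, abs_of_pos hrpos]; linarith
    have hd2 : dist (-r) 0 < δ := by rw [Real.dist_eq, sub_zero, abs_of_neg (by linarith : -r < 0)]; linarith
    obtain ⟨hp1, hp2⟩ := hball hd1
    obtain ⟨hn1, hn2⟩ := hball hd2
    have hmp := hmax hp2
    have hmn := hmax hn2
    simp only [IsMaxOn, IsMaxFilter] at hmp hmn
    have e1 : ψ (m + r) ≤ ψ m := hmp
    have e2 : ψ (m + -r) ≤ ψ m := hmn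
    simp only [hψ] at e1 e2
    nlinarith [mul_pos hεpos (mul_pos hrpos hrpos), e1, e2, hp1, hn1]
  rw [concaveOn_iff_slope_anti_adjacent]
  refine ⟨convex_Icc a b, fun x y z hx hz hxy hyz => ?_⟩
  have h := chord x hx z hz (hxy.trans hyz) y ⟨hxy, hyz⟩
  have hzx : z - x ≠ 0 := by linarith [hxy.trans hyz]
  have hfz : (f z - f x) / (z - x) * (z - x) = f z - f x := div_mul_cancel₀ _ hzx
  rw [div_le_div_iff₀ (by linarith) (by linarith)]
  nlinarith [mul_nonneg (by linarith : (0:ℝ) ≤ z - x)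
    (by linarith : (0:ℝ) ≤ f y - f x - (f z - f x) / (z - x) * (y - x)), hfz]
private lemma lemD {a m b : ℝ} (ham : a < m) (hmb : m < b) (f : ℝ → ℝ)
    (h1 : ConcaveOn ℝ (Set.Icc a m) f) (h2 : ConcaveOn ℝ (Set.Icc m b) f)
    (hc : dPlus f m ≤ dMinus f m) : ConcaveOn ℝ (Set.Icc a b) f := by
  have K : ∀ p, a ≤ p → p < m → ∀ q, m < q → q ≤ b →
      (f q - f m) / (q - m) ≤ (f m - f p) / (m - p) := by
    intro p hap hpm q hmq hqb
    have kp : dMinus f m ≤ (((f m - f p) / (m - p) : ℝ) : EReal) := by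
      apply Filter.liminf_le_of_frequently_le'
      apply Filter.Eventually.frequently
      have hev : ∀ᶠ t in nhdsWithin m (Set.Iio m), t ∈ Set.Ioo p m := by
        rw [eventually_nhdsWithin_iff]
        filter_upwards [eventually_gt_nhds hpm] with t ht ht'
        exact ⟨ht, ht'⟩
      filter_upwards [hev] with t ht
      have heq : (f t - f m) / (t - m) = (f m - f t) / (m - t) := by
        rw [show f t - f m = -(f m - f t) by ring, show t - m = -(m - t) by ring, neg_div_neg_eq]
      have hle : (f m - f t) / (m - t) ≤ (f m - f p) / (m - p) := by
        rcases eq_or_lt_of_le (le_of_lt ht.1) with h | h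
        · rw [← h]
        · exact slopeH1 h ht.2 (h1.slope_anti_adjacent ⟨hap, hpm.le⟩
            ⟨ham.le, le_refl m⟩ h ht.2)
      rw [heq]
      exact_mod_cast EReal.coe_le_coe_iff.2 hle
    have kq : (((f q - f m) / (q - m) : ℝ) : EReal) ≤ dPlus f m := by
      apply Filter.le_limsup_of_frequently_le'
      apply Filter.Eventually.frequently
      have hev : ∀ᶠ t in nhdsWithin m (Set.Ioi m), t ∈ Set.Ioo m q := by
        rw [eventually_nhdsWithin_iff]
        filter_upwards [eventually_lt_nhds hmq] with t ht ht'
        exact ⟨ht', ht⟩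
      filter_upwards [hev] with t ht
      have hle : (f q - f m) / (q - m) ≤ (f t - f m) / (t - m) := by
        rcases eq_or_lt_of_le (le_of_lt ht.2) with h | h
        · rw [h]
        · exact slopeH2 ht.1 h (h2.slope_anti_adjacent ⟨le_refl m, hmb.le⟩
            ⟨hmq.le, hqb⟩ ht.1 h)
      exact_mod_cast EReal.coe_le_coe_iff.2 hle
    exact_mod_cast (kq.trans (hc.trans kp))
  rw [concaveOn_iff_slope_anti_adjacent]
  refine ⟨convex_Icc a b, fun x y z hx hz hxy hyz => ?_⟩
  rcases le_or_gt z m with hzm | hmz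
  · exact h1.slope_anti_adjacent ⟨hx.1, (hxy.trans hyz).le.trans hzm⟩
      ⟨hx.1.trans (hxy.trans hyz).le, hzm⟩ hxy hyz
  rcases le_or_gt m x with hmx | hxm
  · exact h2.slope_anti_adjacent ⟨hmx, hx.2⟩ ⟨hmx.trans (hxy.trans hyz).le, hz.2⟩ hxy hyz
  -- x < m < z
  rcases lt_trichotomy y m with hym | hym | hym
  · -- x < y < m < z
    have k1 : (f m - f y) / (m - y) ≤ (f y - f x) / (y - x) :=
      h1.slope_anti_adjacent ⟨hx.1, hxm.le⟩ ⟨ham.le, le_refl m⟩ hxy hym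
    have k2 : (f z - f m) / (z - m) ≤ (f m - f y) / (m - y) :=
      K y (hx.1.trans hxy.le) hym z hmz hz.2
    exact le_trans (slopeH2 hym hmz k2) k1
  · subst hym
    exact K x hx.1 hxm z hmz hz.2
  · -- x < m < y < z
    have k1 : (f z - f y) / (z - y) ≤ (f y - f m) / (y - m) :=
      h2.slope_anti_adjacent ⟨le_refl m, hmb.le⟩ ⟨(hym.trans hyz).le, hz.2⟩ hym hyz
    have k2 : (f y - f m) / (y - m) ≤ (f m - f x) / (m - x) :=
      K x hx.1 hxm y hym (hyz.le.trans hz.2)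
    exact le_trans k1 (slopeH1 hxm hym k2)
private lemma lemC : ∀ (n : ℕ) (S : Finset ℝ), S.card ≤ n → ∀ (a b : ℝ), a < b →
    ∀ (f : ℝ → ℝ), ContinuousOn f (Set.Icc a b) → ((S : Set ℝ) ⊆ Set.Ioo a b) →
    (∀ t ∈ Set.Ioo a b \ (S : Set ℝ), SuppSecondLEZero f t) →
    (∀ t ∈ (S : Set ℝ), dPlus f t ≤ dMinus f t) → ConcaveOn ℝ (Set.Icc a b) f := by
  intro n
  induction n with
  | zero =>
    intro S hcard a b hab f hf hS hsupp _
    have hSe : S = ∅ := Finset.card_eq_zero.mp (Nat.le_zero.mp hcard)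
    subst hSe
    exact lemB f hf (fun t ht => hsupp t ⟨ht, by simp⟩)
  | succ n ih =>
    intro S hcard a b hab f hf hS hsupp hcorner
    rcases S.eq_empty_or_nonempty with rfl | ⟨m, hm⟩
    · exact lemB f hf (fun t ht => hsupp t ⟨ht, by simp⟩)
    have hmS : (m : ℝ) ∈ (S : Set ℝ) := hm
    have hmab : m ∈ Set.Ioo a b := hS hmS
    set SL := S.filter (fun t => t < m) with hSL
    set SR := S.filter (fun t => m < t) with hSR
    have hcardL : SL.card ≤ n := by
      have h1 : SL ⊆ S.erase m := by
        intro t ht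
        rw [Finset.mem_erase]
        rw [hSL, Finset.mem_filter] at ht
        exact ⟨ne_of_lt ht.2, ht.1⟩
      calc SL.card ≤ (S.erase m).card := Finset.card_le_card h1
        _ = S.card - 1 := Finset.card_erase_of_mem hm
        _ ≤ n := by omega
    have hcardR : SR.card ≤ n := by
      have h1 : SR ⊆ S.erase m := by
        intro t ht
        rw [Finset.mem_erase]
        rw [hSR, Finset.mem_filter] at ht
        exact ⟨ne_of_gt ht.2, ht.1⟩
      calc SR.card ≤ (S.erase m).card := Finset.card_le_card h1
        _ = S.card - 1 := Finset.card_erase_of_mem hm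
        _ ≤ n := by omega
    have hL : ConcaveOn ℝ (Set.Icc a m) f := by
      apply ih SL hcardL a m hmab.1 f (hf.mono (Set.Icc_subset_Icc le_rfl hmab.2.le))
      · intro t ht
        rw [Finset.coe_filter] at ht
        exact ⟨(hS ht.1).1, ht.2⟩
      · intro t ht
        apply hsupp t
        refine ⟨⟨ht.1.1, ht.1.2.trans hmab.2⟩, fun htS => ht.2 ?_⟩
        rw [hSL, Finset.coe_filter]
        exact ⟨htS, ht.1.2⟩
      · intro t ht
        rw [Finset.coe_filter] at ht
        exact hcorner t ht.1
    have hR : ConcaveOn ℝ (Set.Icc m b) f := by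
      apply ih SR hcardR m b hmab.2 f (hf.mono (Set.Icc_subset_Icc hmab.1.le le_rfl))
      · intro t ht
        rw [Finset.coe_filter] at ht
        exact ⟨ht.2, (hS ht.1).2⟩
      · intro t ht
        apply hsupp t
        refine ⟨⟨hmab.1.trans ht.1.1, ht.1.2⟩, fun htS => ht.2 ?_⟩
        rw [hSR, Finset.coe_filter]
        exact ⟨htS, ht.1.1⟩
      · intro t ht
        rw [Finset.coe_filter] at ht
        exact hcorner t ht.1
    exact lemD hmab.1 hmab.2 f hL hR (hcorner m hmS)

/-- Piecewise support-sense concavity with finitely many corner points where the right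
derivative is at most the left derivative. -/
theorem concave_nonneg_piecewise (l : ℝ) (hl : 0 < l) (f : ℝ → ℝ)
    (hf : ContinuousOn f (Set.Icc 0 l)) (h0 : f 0 = 0) (hl0 : f l = 0)
    (S : Finset ℝ) (hS : (S : Set ℝ) ⊆ Set.Ioo 0 l)
    (hsupp : ∀ t ∈ Set.Ioo 0 l \ (S : Set ℝ), SuppSecondLEZero f t)
    (hcorner : ∀ t ∈ (S : Set ℝ), dPlus f t ≤ dMinus f t) :
    ConcaveOn ℝ (Set.Icc 0 l) f ∧ ∀ t ∈ Set.Icc 0 l, 0 ≤ f t := by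
  have hconc : ConcaveOn ℝ (Set.Icc 0 l) f :=
    lemC S.card S le_rfl 0 l hl f hf hS hsupp hcorner
  refine ⟨hconc, fun t ht => ?_⟩
  have hlne : l ≠ 0 := ne_of_gt hl
  have h1 : (0:ℝ) ≤ (l - t) / l := by
    apply div_nonneg (by linarith [ht.2]) hl.le
  have h2 : (0:ℝ) ≤ t / l := div_nonneg ht.1 hl.le
  have h3 : (l - t) / l + t / l = 1 := by field_simp; ring
  have := hconc.2 (Set.left_mem_Icc.2 hl.le) (Set.right_mem_Icc.2 hl.le) h1 h2 h3
  simp only [smul_eq_mul, h0, hl0, mul_zero, add_zero] at this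
  have heq : (0:ℝ) + t / l * l = t := by field_simp; ring
  rwa [heq] at this
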